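/- arXiv:1903.05613 — 3 statements merged into one kernel-verified Lean document; each statement's English description precedes it below -/
import Mathlib

section
/- Let G be a simple connected graph with p vertices and diameter d, let L₀ ⊆ V(G) be nonempty with k = max_{x,y ∈ L₀} d(x,y), and for each vertex v let L(v) = d(v, L₀). Let δ = 1 if |L₀| = 1 and δ = 0 if |L₀| ≥ 2. Then the radio number of G satisfies rn(G) ≥ (p − 1)(d − k + 1) + δ − 2 · Σ_{v ∈ V(G)} L(v). -/
open SimpleGraph Finset

/-- The Petersen graph as the Kneser graph K(5,2). -/
def petersen : SimpleGraph {s : Finset (Fin 5) // s.card = 2} where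
  Adj a b := Disjoint a.1 b.1
  symm := ⟨fun _ _ h => h.symm⟩
  loopless := ⟨fun a h => by
    have h0 : a.1 = ⊥ := disjoint_self.mp h
    have h2 := a.2
    rw [h0] at h2
    simp at h2⟩

/-- A radio labeling of `G`: for all distinct `u, v`,
`d(u,v) + |φ(u) - φ(v)| ≥ diam(G) + 1`. -/
def IsRadioLabeling {V : Type*} (G : SimpleGraph V) (φ : V → ℕ) : Prop :=
  ∀ u v : V, u ≠ v → (G.diam : ℤ) + 1 ≤ (G.dist u v : ℤ) + |(φ u : ℤ) - (φ v : ℤ)|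

/-- The span of a labeling: the maximum difference between two labels. -/
noncomputable def span {V : Type*} (φ : V → ℕ) : ℕ :=
  sSup (Set.range fun p : V × V => φ p.1 - φ p.2)

/-- The radio number of `G`: the minimum span over all radio labelings. -/
noncomputable def radioNumber {V : Type*} (G : SimpleGraph V) : ℕ :=
  sInf {s | ∃ φ : V → ℕ, IsRadioLabeling G φ ∧ span φ = s}

/-- `d(v, S)`: the minimum distance from `v` to a vertex of `S`. -/
noncomputable def distToSet {V : Type*} (G : SimpleGraph V) (v : V) (S : Finset V) : ℕ :=
  sInf ((fun w => G.dist v w) '' ↑S)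

/-- `diam(S)`: the maximum distance in `G` between two vertices of `S`. -/
noncomputable def setDiam {V : Type*} (G : SimpleGraph V) (S : Finset V) : ℕ :=
  sSup {d | ∃ x ∈ S, ∃ y ∈ S, G.dist x y = d}

theorem stmt_3 {V : Type*} [Fintype V] (G : SimpleGraph V) (hG : G.Connected)
    (hcard : 2 ≤ Fintype.card V) (L₀ : Finset V) (hL : L₀.Nonempty) :
    ((Fintype.card V : ℤ) - 1) * ((G.diam : ℤ) - (setDiam G L₀ : ℤ) + 1)
      + (if L₀.card = 1 then 1 else 0)
      - 2 * ∑ v : V, (distToSet G v L₀ : ℤ) ≤ (radioNumber G : ℤ) := by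
  classical
  have hne : Nonempty V := Fintype.card_pos_iff.mp (by omega)
  set n := Fintype.card V with hn
  have hn2 : 2 ≤ n := hcard
  -- ediam is finite
  have hdne : G.ediam ≠ ⊤ := by
    obtain ⟨u, v, huv⟩ := G.exists_edist_eq_ediam_of_finite
    rw [← huv]
    exact edist_ne_top_iff_reachable.mpr (hG u v)
  have hdd : ∀ u v : V, G.dist u v ≤ G.diam := fun u v => G.dist_le_diam hdne
  set D : ℤ := (G.diam : ℤ) with hD
  set k : ℤ := (setDiam G L₀ : ℤ) with hk'
  -- setDiam bounds distances within L₀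
  have hkb : ∀ x ∈ L₀, ∀ y ∈ L₀, G.dist x y ≤ setDiam G L₀ := by
    intro x hx y hy
    have hsub : {d | ∃ x ∈ L₀, ∃ y ∈ L₀, G.dist x y = d} ⊆ Set.Iic G.diam := by
      rintro d ⟨a, _, b, _, rfl⟩
      exact hdd a b
    exact le_csSup (BddAbove.mono hsub (bddAbove_Iic)) ⟨x, hx, y, hy, rfl⟩
  -- distToSet is achieved
  have hLmem : ∀ v : V, ∃ w ∈ L₀, G.dist v w = distToSet G v L₀ := by
    intro v
    have hne' : ((fun w => G.dist v w) '' (↑L₀ : Set V)).Nonempty :=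
      (hL.to_set).image _
    obtain ⟨w, hw, hdw⟩ := Nat.sInf_mem hne'
    exact ⟨w, hw, hdw⟩
  have hLle : ∀ v : V, ∀ w ∈ L₀, distToSet G v L₀ ≤ G.dist v w := by
    intro v w hw
    exact Nat.sInf_le ⟨w, hw, rfl⟩
  -- the set of spans of radio labelings is nonempty
  have hset : {s | ∃ φ : V → ℕ, IsRadioLabeling G φ ∧ span φ = s}.Nonempty := by
    refine ⟨span (fun v => G.diam * (Fintype.equivFin V v : ℕ)),
      fun v => G.diam * (Fintype.equivFin V v : ℕ), ?_, rfl⟩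
    intro u v huv
    have hij : ((Fintype.equivFin V u : ℕ) : ℤ) ≠ ((Fintype.equivFin V v : ℕ) : ℤ) := by
      intro h
      exact huv ((Fintype.equivFin V).injective (Fin.val_injective (by exact_mod_cast h)))
    have hd1 : (1 : ℤ) ≤ (G.dist u v : ℤ) := by
      exact_mod_cast hG.pos_dist_of_ne huv
    have habs : (G.diam : ℤ) ≤
        |((G.diam * (Fintype.equivFin V u : ℕ) : ℕ) : ℤ) -
          ((G.diam * (Fintype.equivFin V v : ℕ) : ℕ) : ℤ)| := by
      push_cast
      rw [← mul_sub, abs_mul, abs_of_nonneg (by positivity : (0:ℤ) ≤ (G.diam : ℤ))]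
      have h1 : (1:ℤ) ≤ |((Fintype.equivFin V u : ℕ) : ℤ) - ((Fintype.equivFin V v : ℕ) : ℤ)| :=
        Int.one_le_abs (sub_ne_zero.mpr hij)
      nlinarith [Int.natCast_nonneg G.diam]
    linarith
  obtain ⟨φ, hφ, hspan⟩ : ∃ φ, IsRadioLabeling G φ ∧ span φ = radioNumber G :=
    Nat.sInf_mem hset
  -- sort the vertices by label
  set e : Fin n ≃ V := (Fintype.equivFin V).symm with he
  set σ : Equiv.Perm (Fin n) := Tuple.sort (φ ∘ e) with hσ
  set xe : Fin n ≃ V := σ.trans e with hxe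
  have hmono : Monotone (fun i : Fin n => φ (xe i)) := Tuple.monotone_sort (φ ∘ e)
  have hn1 : 0 < n := by omega
  set iF : ℕ → Fin n := fun i => ⟨min i (n-1), by omega⟩ with hiFdef
  set x : ℕ → V := fun i => xe (iF i) with hx
  have hiF : ∀ i, i ≤ n - 1 → (iF i : ℕ) = i := by
    intro i h
    simp [hiFdef, min_eq_left h]
  have hmono' : ∀ i j : ℕ, i ≤ j → φ (x i) ≤ φ (x j) := by
    intro i j h
    apply hmono
    simp only [hiFdef, Fin.mk_le_mk]
    omega
  have hxne : ∀ i j : ℕ, i ≤ n-1 → j ≤ n-1 → i ≠ j → x i ≠ x j := by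
    intro i j hi hj hij
    apply xe.injective.ne
    intro h
    apply hij
    have := congrArg Fin.val h
    rwa [hiF i hi, hiF j hj] at this
  set LL : ℕ → ℤ := fun i => (distToSet G (x i) L₀ : ℤ) with hLL
  -- per-step bound
  have key : ∀ i, i < n - 1 →
      D + 1 - (LL i + k + LL (i+1)) ≤ (φ (x (i+1)) : ℤ) - φ (x i) := by
    intro i hi
    have hxi : x i ≠ x (i+1) := hxne i (i+1) (by omega) (by omega) (by omega)
    have hrad := hφ (x (i+1)) (x i) (Ne.symm hxi)
    have hle : φ (x i) ≤ φ (x (i+1)) := hmono' i (i+1) (by omega)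
    have habs : |(φ (x (i+1)) : ℤ) - φ (x i)| = (φ (x (i+1)) : ℤ) - φ (x i) := by
      apply abs_of_nonneg
      have : (φ (x i) : ℤ) ≤ (φ (x (i+1)) : ℤ) := by exact_mod_cast hle
      linarith
    rw [habs] at hrad
    -- distance bound through L₀
    obtain ⟨wa, hwa, hda⟩ := hLmem (x i)
    obtain ⟨wb, hwb, hdb⟩ := hLmem (x (i+1))
    have ht : G.dist (x (i+1)) (x i) ≤
        distToSet G (x i) L₀ + setDiam G L₀ + distToSet G (x (i+1)) L₀ := by
      calc G.dist (x (i+1)) (x i) ≤ G.dist (x (i+1)) wb + G.dist wb (x i) :=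
            hG.dist_triangle
        _ ≤ G.dist (x (i+1)) wb + (G.dist wb wa + G.dist wa (x i)) := by
            exact Nat.add_le_add_left hG.dist_triangle _
        _ = G.dist (x (i+1)) wb + G.dist wb wa + G.dist (x i) wa := by
            rw [SimpleGraph.dist_comm (G := G) (u := wa) (v := x i)]; ring
        _ ≤ distToSet G (x (i+1)) L₀ + setDiam G L₀ + distToSet G (x i) L₀ := by
            gcongr
            · exact hdb.le
            · exact hkb wb hwb wa hwa
            · exact hda.le
        _ = distToSet G (x i) L₀ + setDiam G L₀ + distToSet G (x (i+1)) L₀ := by ring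
    have htz : (G.dist (x (i+1)) (x i) : ℤ) ≤ LL i + k + LL (i+1) := by
      simp only [hLL, hk']
      exact_mod_cast ht
    linarith
  -- telescoping
  have htel : (φ (x (n-1)) : ℤ) - φ (x 0) =
      ∑ i ∈ Finset.range (n-1), ((φ (x (i+1)) : ℤ) - φ (x i)) :=
    (Finset.sum_range_sub (fun i => (φ (x i) : ℤ)) (n-1)).symm
  have hsum : ∑ i ∈ Finset.range (n-1), (D + 1 - (LL i + k + LL (i+1))) ≤
      (φ (x (n-1)) : ℤ) - φ (x 0) := by
    rw [htel]
    exact Finset.sum_le_sum (fun i hi => key i (Finset.mem_range.mp hi))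
  -- sum manipulation
  set T : ℤ := ∑ i ∈ Finset.range n, LL i with hT
  have hn' : n - 1 + 1 = n := by omega
  have hT1 : ∑ i ∈ Finset.range (n-1), LL i = T - LL (n-1) := by
    have h := Finset.sum_range_succ LL (n-1)
    rw [hn'] at h
    rw [hT, h]; ring
  have hT2 : ∑ i ∈ Finset.range (n-1), LL (i+1) = T - LL 0 := by
    have h := Finset.sum_range_succ' LL (n-1)
    rw [hn'] at h
    rw [hT, h]; ring
  have hTv : T = ∑ v : V, (distToSet G v L₀ : ℤ) := by
    rw [hT, ← Fin.sum_univ_eq_sum_range (fun i => LL i) n]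
    rw [← Equiv.sum_comp xe (fun v => (distToSet G v L₀ : ℤ))]
    apply Finset.sum_congr rfl
    intro j _
    simp only [hLL, hx]
    have hj : iF (j : ℕ) = j := Fin.ext (by rw [hiF j.val (by omega)])
    rw [hj]
  have hsplit : ∑ i ∈ Finset.range (n-1), (D + 1 - (LL i + k + LL (i+1))) =
      ((n-1 : ℕ) : ℤ) * (D - k + 1) - (T - LL (n-1)) - (T - LL 0) := by
    rw [← hT1, ← hT2]
    rw [Finset.sum_sub_distrib]
    simp only [Finset.sum_add_distrib, Finset.sum_const, Finset.card_range, nsmul_eq_mul]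
    ring
  -- delta bound
  have hdelta : (if L₀.card = 1 then (1:ℤ) else 0) ≤ LL 0 + LL (n-1) := by
    have h0 : (0:ℤ) ≤ LL 0 := by simp [hLL]
    have h1 : (0:ℤ) ≤ LL (n-1) := by simp [hLL]
    split
    · next hcard1 =>
      obtain ⟨w, hw⟩ := Finset.card_eq_one.mp hcard1
      have hLLw : ∀ i, LL i = (G.dist (x i) w : ℤ) := by
        intro i
        simp [hLL, distToSet, hw]
      have hxne0 : x 0 ≠ x (n-1) := hxne 0 (n-1) (by omega) (by omega) (by omega)
      rcases eq_or_ne (x 0) w with h0w | h0w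
      · have hne1 : x (n-1) ≠ w := fun hc => hxne0 (h0w.trans hc.symm)
        have := hG.pos_dist_of_ne hne1
        have : (1:ℤ) ≤ (G.dist (x (n-1)) w : ℤ) := by exact_mod_cast this
        rw [hLLw 0, hLLw (n-1)]
        have hd0 : (0:ℤ) ≤ (G.dist (x 0) w : ℤ) := by positivity
        linarith
      · have := hG.pos_dist_of_ne h0w
        have : (1:ℤ) ≤ (G.dist (x 0) w : ℤ) := by exact_mod_cast this
        rw [hLLw 0, hLLw (n-1)]
        have hd0 : (0:ℤ) ≤ (G.dist (x (n-1)) w : ℤ) := by positivity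
        linarith
    · linarith
  -- span bound
  have hspan_ge : (φ (x (n-1)) : ℤ) - φ (x 0) ≤ (radioNumber G : ℤ) := by
    rw [← hspan]
    have hmem : φ (x (n-1)) - φ (x 0) ∈ Set.range (fun p : V × V => φ p.1 - φ p.2) :=
      ⟨(x (n-1), x 0), rfl⟩
    have hbdd : BddAbove (Set.range fun p : V × V => φ p.1 - φ p.2) :=
      (Set.finite_range _).bddAbove
    have h1 : φ (x (n-1)) - φ (x 0) ≤ span φ := le_csSup hbdd hmem
    have h2 : φ (x 0) ≤ φ (x (n-1)) := hmono' 0 (n-1) (by omega)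
    omega
  -- put everything together
  have hcast : ((n-1 : ℕ) : ℤ) = (n : ℤ) - 1 := by omega
  rw [hsplit] at hsum
  rw [hcast, hTv] at hsum
  linarith
end

section
/- Let G be a simple connected graph on p vertices with diameter d, L₀ ⊆ V(G) with |L₀| ≥ 2 and k = max_{x,y∈L₀} d(x,y). Suppose x₀, x₁, ..., x_{p−1} is an ordering of V(G) with x₀, x_{p−1} ∈ L₀ such that d(x_i, x_{i+1}) = d(x_i, L₀) + d(x_{i+1}, L₀) + k for all 0 ≤ i ≤ p−2, and define φ(x₀) = 0 and φ(x_{i+1}) = φ(x_i) + d + 1 − d(x_i, L₀) − d(x_{i+1}, L₀) − k. If φ is a radio labeling of G, then its span equals (p−1)(d−k+1) − 2·Σ_{v∈V(G)} d(v, L₀), and hence rn(G) = (p−1)(d−k+1) − 2·Σ_{v∈V(G)} d(v, L₀). -/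
open SimpleGraph Finset

section helpers
variable {V : Type*} {G : SimpleGraph V} {L₀ : Finset V}

lemma distToSet_le_dist {v w : V} (hw : w ∈ L₀) : distToSet G v L₀ ≤ G.dist v w :=
  Nat.sInf_le ⟨w, by simpa using hw, rfl⟩

lemma distToSet_eq_zero {v : V} (hv : v ∈ L₀) : distToSet G v L₀ = 0 := by
  have h := distToSet_le_dist (G := G) (v := v) hv
  rw [SimpleGraph.dist_self] at h
  omega

lemma exists_distToSet (hL : L₀.Nonempty) (v : V) :
    ∃ w ∈ L₀, distToSet G v L₀ = G.dist v w := by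
  have h : ((fun w => G.dist v w) '' ↑L₀).Nonempty := by
    obtain ⟨w, hw⟩ := hL
    exact ⟨G.dist v w, w, by simpa using hw, rfl⟩
  obtain ⟨w, hw, hval⟩ := Nat.sInf_mem h
  exact ⟨w, by simpa using hw, hval.symm⟩

lemma dist_le_setDiam (htop : G.ediam ≠ ⊤) {a b : V} (ha : a ∈ L₀) (hb : b ∈ L₀) :
    G.dist a b ≤ setDiam G L₀ := by
  have hbdd : BddAbove {d | ∃ x ∈ L₀, ∃ y ∈ L₀, G.dist x y = d} := by
    refine ⟨G.diam, ?_⟩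
    rintro d ⟨p, hp, q, hq, rfl⟩
    exact SimpleGraph.dist_le_diam htop
  exact le_csSup hbdd ⟨a, ha, b, hb, rfl⟩

lemma dist_le_distToSet_add (hconn : G.Connected) (htop : G.ediam ≠ ⊤) (hL : L₀.Nonempty)
    (u v : V) :
    G.dist u v ≤ distToSet G u L₀ + distToSet G v L₀ + setDiam G L₀ := by
  obtain ⟨w, hw, hwe⟩ := exists_distToSet (G := G) hL u
  obtain ⟨w', hw', hwe'⟩ := exists_distToSet (G := G) hL v
  have h1 : G.dist u v ≤ G.dist u w + G.dist w v := hconn.dist_triangle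
  have h2 : G.dist w v ≤ G.dist w w' + G.dist w' v := hconn.dist_triangle
  have h3 : G.dist w w' ≤ setDiam G L₀ := dist_le_setDiam htop hw hw'
  have h4 : G.dist w' v = G.dist v w' := SimpleGraph.dist_comm ..
  omega

lemma sum_pair_eq (B : ℕ → ℤ) (m : ℕ) :
    ∑ i ∈ Finset.range m, (B i + B (i + 1))
      = 2 * ∑ i ∈ Finset.range (m + 1), B i - B 0 - B m := by
  induction m with
  | zero => simp; ring
  | succ n ih =>
      rw [Finset.sum_range_succ, ih, Finset.sum_range_succ (f := B) (n := n + 1)]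
      ring

end helpers
lemma tele_split (c : ℕ → ℤ) (E : ℤ) : ∀ m : ℕ,
    ∑ i ∈ Finset.range m, (E - c i - c (i + 1))
      = m * E - (2 * ∑ i ∈ Finset.range (m + 1), c i - c 0 - c m) := by
  intro m
  induction m with
  | zero => simp; ring
  | succ n ih =>
      rw [Finset.sum_range_succ, ih, Finset.sum_range_succ (n := n + 1)]
      push_cast
      ring
theorem stmt_4 {V : Type*} [Fintype V] (G : SimpleGraph V) (hG : G.Connected)
    {m : ℕ} (hm : Fintype.card V = m + 1)
    (L₀ : Finset V) (hL : 2 ≤ L₀.card)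
    (x : Fin (m + 1) → V) (hx : Function.Bijective x)
    (hfirst : x 0 ∈ L₀) (hlast : x (Fin.last m) ∈ L₀)
    (hdist : ∀ t : Fin m, G.dist (x t.castSucc) (x t.succ)
      = distToSet G (x t.castSucc) L₀ + distToSet G (x t.succ) L₀ + setDiam G L₀)
    (φ : V → ℕ) (hφ0 : φ (x 0) = 0)
    (hrec : ∀ t : Fin m, (φ (x t.succ) : ℤ) = (φ (x t.castSucc) : ℤ) + (G.diam : ℤ) + 1
      - (distToSet G (x t.castSucc) L₀ : ℤ) - (distToSet G (x t.succ) L₀ : ℤ)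
      - (setDiam G L₀ : ℤ))
    (hradio : IsRadioLabeling G φ) :
    (span φ : ℤ) = ((Fintype.card V : ℤ) - 1) * ((G.diam : ℤ) - (setDiam G L₀ : ℤ) + 1)
        - 2 * ∑ v : V, (distToSet G v L₀ : ℤ)
    ∧ (radioNumber G : ℤ)
      = ((Fintype.card V : ℤ) - 1) * ((G.diam : ℤ) - (setDiam G L₀ : ℤ) + 1)
        - 2 * ∑ v : V, (distToSet G v L₀ : ℤ) := by
  have hnV : Nonempty V := Fintype.card_pos_iff.mp (by omega)
  have htop : G.ediam ≠ ⊤ := by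
    obtain ⟨u, v, h⟩ := SimpleGraph.exists_edist_eq_ediam_of_finite (G := G)
    rw [← h]
    exact SimpleGraph.edist_ne_top_iff_reachable.mpr (hG.preconnected u v)
  have hLne : L₀.Nonempty := Finset.card_pos.mp (by omega)
  set ι : ℕ → Fin (m + 1) := fun i => ⟨i % (m + 1), Nat.mod_lt _ (Nat.succ_pos m)⟩ with hι
  have hιval : ∀ i, i ≤ m → (ι i : ℕ) = i := fun i hi => Nat.mod_eq_of_lt (by omega)
  have hι0 : ι 0 = 0 := by ext; simpa [hι] using Nat.mod_eq_of_lt (by omega)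
  have hιm : ι m = Fin.last m := by ext; simpa [hι] using Nat.mod_eq_of_lt (by omega)
  have hcast' : ∀ i (hi : i < m),
      ι i = Fin.castSucc ⟨i, hi⟩ ∧ ι (i + 1) = Fin.succ ⟨i, hi⟩ := by
    intro i hi
    refine ⟨Fin.ext ?_, Fin.ext ?_⟩
    · show i % (m + 1) = i
      exact Nat.mod_eq_of_lt (by omega)
    · show (i + 1) % (m + 1) = i + 1
      exact Nat.mod_eq_of_lt (by omega)
  have hsumgen : ∀ y : Fin (m + 1) → V, Function.Bijective y →
      ∑ i ∈ Finset.range (m + 1), (distToSet G (y (ι i)) L₀ : ℤ)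
        = ∑ v : V, (distToSet G v L₀ : ℤ) := by
    intro y hy
    have h1 : ∑ i : Fin (m + 1), ((distToSet G (y (ι i.val)) L₀ : ℤ))
        = ∑ i ∈ Finset.range (m + 1), (distToSet G (y (ι i)) L₀ : ℤ) :=
      Fin.sum_univ_eq_sum_range (fun i => (distToSet G (y (ι i)) L₀ : ℤ)) (m + 1)
    rw [← h1]
    refine Fintype.sum_bijective y hy _ _ ?_
    intro i
    have h2 : ι i.val = i := Fin.ext (hιval i.val (by omega))
    rw [h2]
  -- lower-bound core
  have hcore : ∀ (ψ : V → ℕ), IsRadioLabeling G ψ → ∀ y : Fin (m + 1) → V,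
      Function.Bijective y → Monotone (fun i => ψ (y i)) →
      (m : ℤ) * ((G.diam : ℤ) + 1 - (setDiam G L₀ : ℤ)) - 2 * ∑ v : V, (distToSet G v L₀ : ℤ)
        ≤ (ψ (y (ι m)) : ℤ) - (ψ (y (ι 0)) : ℤ) := by
    intro ψ hψ y hy hmono
    have hstep : ∀ i ∈ Finset.range m,
        (G.diam : ℤ) + 1 - (setDiam G L₀ : ℤ) - (distToSet G (y (ι i)) L₀ : ℤ)
            - (distToSet G (y (ι (i + 1))) L₀ : ℤ)
          ≤ (ψ (y (ι (i + 1))) : ℤ) - (ψ (y (ι i)) : ℤ) := by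
      intro i hi
      rw [Finset.mem_range] at hi
      have hne : y (ι (i + 1)) ≠ y (ι i) := by
        intro h
        have h' := hy.injective h
        have h1 : (ι (i + 1) : ℕ) = i + 1 := hιval _ (by omega)
        have h2 : (ι i : ℕ) = i := hιval _ (by omega)
        rw [Fin.ext_iff, h1, h2] at h'
        omega
      have hrad := hψ _ _ hne
      have hd : G.dist (y (ι (i + 1))) (y (ι i))
          ≤ distToSet G (y (ι (i + 1))) L₀ + distToSet G (y (ι i)) L₀ + setDiam G L₀ :=
        dist_le_distToSet_add hG htop hLne _ _
      have hle : ι i ≤ ι (i + 1) := by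
        rw [Fin.le_def, hιval _ (by omega), hιval _ (by omega)]; omega
      have hmle : (ψ (y (ι i)) : ℤ) ≤ (ψ (y (ι (i + 1))) : ℤ) := by
        exact_mod_cast hmono hle
      rw [abs_of_nonneg (by omega :
        (0:ℤ) ≤ (ψ (y (ι (i + 1))) : ℤ) - (ψ (y (ι i)) : ℤ))] at hrad
      omega
    have hsum := Finset.sum_le_sum hstep
    have hsplit := tele_split (fun i => (distToSet G (y (ι i)) L₀ : ℤ))
      ((G.diam : ℤ) + 1 - (setDiam G L₀ : ℤ)) m
    have htel := Finset.sum_range_sub (fun i => (ψ (y (ι i)) : ℤ)) m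
    beta_reduce at hsplit htel
    have hT := hsumgen y hy
    have hc0 : (0:ℤ) ≤ (distToSet G (y (ι 0)) L₀ : ℤ) := Int.natCast_nonneg _
    have hcm : (0:ℤ) ≤ (distToSet G (y (ι m)) L₀ : ℤ) := Int.natCast_nonneg _
    rw [hsplit, htel, hT] at hsum
    linarith
  -- telescoping formula for φ
  have claim : ∀ n, n ≤ m → (φ (x (ι n)) : ℤ)
      = (n : ℤ) * ((G.diam : ℤ) + 1 - (setDiam G L₀ : ℤ))
        - 2 * ∑ i ∈ Finset.range (n + 1), (distToSet G (x (ι i)) L₀ : ℤ)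
        + (distToSet G (x (ι 0)) L₀ : ℤ) + (distToSet G (x (ι n)) L₀ : ℤ) := by
    intro n
    induction n with
    | zero =>
        intro _
        rw [Finset.sum_range_one, hι0]
        push_cast [hφ0]
        ring
    | succ n ih =>
        intro h
        have hn : n < m := by omega
        obtain ⟨hc1, hc2⟩ := hcast' n hn
        have hr := hrec ⟨n, hn⟩
        rw [← hc1, ← hc2] at hr
        rw [hr, Finset.sum_range_succ (n := n + 1), ih (by omega)]
        push_cast
        ring
  -- increments are nonnegative
  have hinc : ∀ n, n < m → (φ (x (ι n)) : ℤ) ≤ (φ (x (ι (n + 1))) : ℤ) := by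
    intro n hn
    obtain ⟨hc1, hc2⟩ := hcast' n hn
    have hr := hrec ⟨n, hn⟩
    rw [← hc1, ← hc2] at hr
    have hdd := hdist ⟨n, hn⟩
    rw [← hc1, ← hc2] at hdd
    have hdle : G.dist (x (ι n)) (x (ι (n + 1))) ≤ G.diam := SimpleGraph.dist_le_diam htop
    omega
  have hmono : ∀ j, j ≤ m → ∀ i, i ≤ j → (φ (x (ι i)) : ℤ) ≤ (φ (x (ι j)) : ℤ) := by
    intro j
    induction j with
    | zero => intro _ i hi; interval_cases i; exact le_refl _
    | succ j ih =>
        intro hj i hi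
        rcases Nat.lt_succ_iff_lt_or_eq.mp (Nat.lt_succ_of_le hi) with h | h
        · exact (ih (by omega) i (by omega)).trans (hinc j (by omega))
        · rw [h]
  have hmax : ∀ v : V, (φ v : ℤ) ≤ (φ (x (Fin.last m)) : ℤ) := by
    intro v
    obtain ⟨t, rfl⟩ := hx.surjective v
    have ht : ι t.val = t := Fin.ext (hιval t.val (by omega))
    have := hmono m le_rfl t.val (by omega)
    rw [ht, hιm] at this
    exact this
  -- span φ
  have hspanφ : span φ = φ (x (Fin.last m)) := by
    apply le_antisymm
    · refine csSup_le (Set.range_nonempty _) ?_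
      rintro s ⟨p, rfl⟩
      have h1 : φ p.1 ≤ φ (x (Fin.last m)) := by exact_mod_cast hmax p.1
      show φ p.1 - φ p.2 ≤ φ (x (Fin.last m))
      omega
    · refine le_csSup ((Set.finite_range _).bddAbove) ⟨(x (Fin.last m), x 0), ?_⟩
      simp [hφ0]
  -- value of the max label
  have hNval : (φ (x (Fin.last m)) : ℤ)
      = (m : ℤ) * ((G.diam : ℤ) + 1 - (setDiam G L₀ : ℤ))
        - 2 * ∑ v : V, (distToSet G v L₀ : ℤ) := by
    have hcl := claim m le_rfl
    rw [hι0, hιm, hsumgen x hx] at hcl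
    rw [distToSet_eq_zero hfirst, distToSet_eq_zero hlast] at hcl
    push_cast at hcl
    linarith
  have hcard : ((Fintype.card V : ℤ) - 1) = (m : ℤ) := by rw [hm]; push_cast; ring
  constructor
  · rw [hspanφ, hcard]
    linear_combination hNval
  · -- radio number
    have hmemN : φ (x (Fin.last m)) ∈
        {s | ∃ ψ : V → ℕ, IsRadioLabeling G ψ ∧ span ψ = s} := ⟨φ, hradio, hspanφ⟩
    have hlow : ∀ s ∈ {s | ∃ ψ : V → ℕ, IsRadioLabeling G ψ ∧ span ψ = s},
        φ (x (Fin.last m)) ≤ s := by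
      rintro s ⟨ψ, hψ, rfl⟩
      have hymono : Monotone (fun i => ψ (x (Tuple.sort (fun i => ψ (x i)) i))) :=
        Tuple.monotone_sort (fun i => ψ (x i))
      have hybij : Function.Bijective (fun i => x (Tuple.sort (fun i => ψ (x i)) i)) :=
        hx.comp (Tuple.sort (fun i => ψ (x i))).bijective
      have hc := hcore ψ hψ _ hybij hymono
      beta_reduce at hc
      rw [hι0, hιm] at hc
      set σ := Tuple.sort (fun i => ψ (x i)) with hσ
      have hmle : ψ (x (σ 0)) ≤ ψ (x (σ (Fin.last m))) := hymono (Fin.zero_le _)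
      have hle2 : ψ (x (σ (Fin.last m))) - ψ (x (σ 0)) ≤ span ψ :=
        le_csSup ((Set.finite_range _).bddAbove)
          ⟨(x (σ (Fin.last m)), x (σ 0)), rfl⟩
      have hle2' : ((ψ (x (σ (Fin.last m))) - ψ (x (σ 0)) : ℕ) : ℤ) ≤ (span ψ : ℤ) :=
        Int.ofNat_le.mpr hle2
      rw [Nat.cast_sub hmle] at hle2'
      have : (φ (x (Fin.last m)) : ℤ) ≤ (span ψ : ℤ) := by linarith [hNval]
      exact_mod_cast this
    have hrn : radioNumber G = φ (x (Fin.last m)) :=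
      le_antisymm (Nat.sInf_le hmemN) (le_csInf ⟨_, hmemN⟩ hlow)
    rw [hrn, hcard]
    linear_combination hNval
end

section
/- For even n ≥ 4, the radio number of the Cartesian product P_n □ P of the path on n vertices with the Petersen graph equals 5n² − n + 1. -/
open SimpleGraph Finset

section Generic
variable {V : Type*} {W : Type*} {G : SimpleGraph V} {H : SimpleGraph W}

/-- A 1-Lipschitz potential bounds walk lengths from below. -/
lemma walk_length_lower (f : V → ℤ) (hf : ∀ a b, G.Adj a b → |f a - f b| ≤ 1) :
    ∀ {u v : V} (w : G.Walk u v), |f u - f v| ≤ (w.length : ℤ)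
  | _, _, SimpleGraph.Walk.nil => by simp
  | u, v, SimpleGraph.Walk.cons h w => by
    have h1 := hf _ _ h
    have h2 := walk_length_lower f hf w
    have := abs_sub_abs_le_abs_sub (f u - f v) 0
    calc |f u - f v| ≤ |f u - _| + |_ - f v| := abs_sub_le _ _ _
    _ ≤ 1 + w.length := by exact add_le_add h1 h2
    _ = ((SimpleGraph.Walk.cons h w).length : ℤ) := by simp [SimpleGraph.Walk.length_cons]; ring

lemma dist_lower (f : V → ℤ) (hf : ∀ a b, G.Adj a b → |f a - f b| ≤ 1)
    (u v : V) (hr : G.Reachable u v) : |f u - f v| ≤ (G.dist u v : ℤ) := by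
  obtain ⟨w, hw⟩ := hr.exists_walk_length_eq_dist
  simpa [hw] using walk_length_lower f hf w

/-- lower bound for distances in a box product -/
lemma boxProd_dist_lower (hG : G.Connected) (hH : H.Connected) :
    ∀ {x y : (V × W)} (w : (G □ H).Walk x y),
      G.dist x.1 y.1 + H.dist x.2 y.2 ≤ w.length
  | _, _, SimpleGraph.Walk.nil => by simp
  | x, y, SimpleGraph.Walk.cons (v := z) h w => by
    have h2 := boxProd_dist_lower hG hH w
    rw [SimpleGraph.boxProd_adj] at h
    rw [SimpleGraph.Walk.length_cons]
    rcases h with ⟨ha, hb⟩ | ⟨ha, hb⟩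
    · have e2 : H.dist x.2 y.2 = H.dist z.2 y.2 := by rw [hb]
      have t0 : G.dist x.1 z.1 ≤ 1 := (SimpleGraph.dist_eq_one_iff_adj.mpr ha).le
      have t1 := hG.dist_triangle (u := x.1) (v := z.1) (w := y.1)
      omega
    · have e2 : G.dist x.1 y.1 = G.dist z.1 y.1 := by rw [hb]
      have t0 : H.dist x.2 z.2 ≤ 1 := (SimpleGraph.dist_eq_one_iff_adj.mpr ha).le
      have t1 := hH.dist_triangle (u := x.2) (v := z.2) (w := y.2)
      omega

lemma boxProd_dist_eq (hG : G.Connected) (hH : H.Connected) (x y : V × W) :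
    (G □ H).dist x y = G.dist x.1 y.1 + H.dist x.2 y.2 := by
  refine le_antisymm ?_ ?_
  · obtain ⟨w1, hw1⟩ := hG.exists_walk_length_eq_dist x.1 y.1
    obtain ⟨w2, hw2⟩ := hH.exists_walk_length_eq_dist x.2 y.2
    calc (G □ H).dist x y = (G □ H).dist (x.1, x.2) (y.1, y.2) := by simp
    _ ≤ ((w1.boxProdLeft H x.2).append (w2.boxProdRight G y.1)).length :=
        SimpleGraph.dist_le _
    _ = _ := by
        rw [SimpleGraph.Walk.length_append]
        exact congrArg₂ (· + ·) ((SimpleGraph.Walk.length_map _ w1).trans hw1)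
          ((SimpleGraph.Walk.length_map _ w2).trans hw2)
  · obtain ⟨w, hw⟩ := (hG.boxProd hH).exists_walk_length_eq_dist x y
    have := boxProd_dist_lower hG hH w
    omega

end Generic


section PathG
variable {n : ℕ}

lemma pathGraph_conn (hn : 1 ≤ n) : (pathGraph n).Connected := by
  have : Nonempty (Fin n) := ⟨⟨0, hn⟩⟩
  exact ⟨pathGraph_preconnected n⟩

lemma pathGraph_dist_le (hn : 1 ≤ n) :
    ∀ (d : ℕ) (i j : Fin n), i.val + d = j.val → (pathGraph n).dist i j ≤ d := by
  intro d
  induction d with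
  | zero => intro i j h; have : i = j := Fin.ext (by omega); simp [this]
  | succ d ih =>
    intro i j h
    have hi1 : i.val + 1 < n := by omega
    have hadj : (pathGraph n).Adj i ⟨i.val + 1, hi1⟩ := by
      rw [pathGraph_adj]; left; rfl
    have h1 : (pathGraph n).dist i ⟨i.val + 1, hi1⟩ ≤ 1 :=
      (SimpleGraph.dist_eq_one_iff_adj.mpr hadj).le
    have h2 := ih ⟨i.val + 1, hi1⟩ j (by simp; omega)
    have h3 := (pathGraph_conn hn).dist_triangle (u := i) (v := ⟨i.val + 1, hi1⟩) (w := j)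
    omega

lemma pathGraph_dist (hn : 1 ≤ n) (i j : Fin n) :
    ((pathGraph n).dist i j : ℤ) = |(i.val : ℤ) - (j.val : ℤ)| := by
  refine le_antisymm ?_ ?_
  · rcases le_total i.val j.val with h | h
    · have := pathGraph_dist_le hn (j.val - i.val) i j (by omega)
      have habs : |(i.val : ℤ) - (j.val : ℤ)| = ((j.val - i.val : ℕ) : ℤ) := by
        rw [abs_sub_comm]; rw [Nat.cast_sub h]; rw [abs_of_nonneg (by omega)]
      omega
    · have := pathGraph_dist_le hn (i.val - j.val) j i (by omega)
      rw [SimpleGraph.dist_comm]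
      have habs : |(i.val : ℤ) - (j.val : ℤ)| = ((i.val - j.val : ℕ) : ℤ) := by
        rw [Nat.cast_sub h]; rw [abs_of_nonneg (by omega)]
      omega
  · refine dist_lower (fun v : Fin n => (v.val : ℤ)) ?_ i j ((pathGraph_conn hn).preconnected i j)
    intro a b hab
    rw [pathGraph_adj] at hab
    rcases hab with h | h <;> simp [abs_le] <;> omega

end PathG

section Petersen

abbrev PV := {s : Finset (Fin 5) // s.card = 2}

instance : DecidableRel petersen.Adj := fun a b =>
  inferInstanceAs (Decidable (Disjoint a.1 b.1))

lemma pv_card : Fintype.card PV = 10 := by decide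

lemma petersen_common : ∀ a b : PV, a ≠ b → ¬ Disjoint a.1 b.1 →
    ∃ c : PV, Disjoint a.1 c.1 ∧ Disjoint c.1 b.1 := by decide

lemma petersen_walk2 (a b : PV) (hne : a ≠ b) (hnd : ¬ Disjoint a.1 b.1) :
    ∃ w : petersen.Walk a b, w.length = 2 := by
  obtain ⟨c, h1, h2⟩ := petersen_common a b hne hnd
  exact ⟨SimpleGraph.Walk.cons h1 (SimpleGraph.Walk.cons h2 SimpleGraph.Walk.nil), rfl⟩

lemma petersen_conn : petersen.Connected := by
  haveI : Nonempty PV := ⟨⟨{0,1}, by decide⟩⟩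
  refine ⟨fun a b => ?_⟩
  by_cases hab : a = b
  · rw [hab]
  by_cases hd : Disjoint a.1 b.1
  · exact SimpleGraph.Adj.reachable hd
  · obtain ⟨w, _⟩ := petersen_walk2 a b hab hd
    exact ⟨w⟩

lemma petersen_dist_le_two (a b : PV) : petersen.dist a b ≤ 2 := by
  by_cases hab : a = b
  · simp [hab, SimpleGraph.dist_self]
  by_cases hd : Disjoint a.1 b.1
  · have : petersen.dist a b = 1 := SimpleGraph.dist_eq_one_iff_adj.mpr hd
    omega
  · obtain ⟨w, hw⟩ := petersen_walk2 a b hab hd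
    have := SimpleGraph.dist_le w
    omega

lemma petersen_dist_pos (a b : PV) (h : a ≠ b) : 1 ≤ petersen.dist a b :=
  petersen_conn.pos_dist_of_ne h

lemma petersen_dist_two (a b : PV) (h : (a.1 ∩ b.1).card = 1) : petersen.dist a b = 2 := by
  have hne : a ≠ b := by
    rintro rfl
    simp [Finset.inter_self, a.2] at h
  have hnd : ¬ Disjoint a.1 b.1 := by
    rw [Finset.disjoint_iff_inter_eq_empty]
    intro hc; rw [hc] at h; simp at h
  have h0 := petersen_dist_pos a b hne
  have h1 : petersen.dist a b ≠ 1 := fun hc => hnd (SimpleGraph.dist_eq_one_iff_adj.mp hc)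
  have h2 := petersen_dist_le_two a b
  omega

end Petersen

section ProdGraph
variable {n : ℕ}

lemma PG_conn (hn : 1 ≤ n) : (pathGraph n □ petersen).Connected :=
  (pathGraph_conn hn).boxProd petersen_conn

lemma PG_dist (hn : 1 ≤ n) (x y : Fin n × PV) :
    (pathGraph n □ petersen).dist x y =
      (x.1.val - y.1.val) + (y.1.val - x.1.val) + petersen.dist x.2 y.2 := by
  have h := boxProd_dist_eq (pathGraph_conn hn) petersen_conn x y
  have h2 := pathGraph_dist hn x.1 y.1
  have h3 : (pathGraph n).dist x.1 y.1 = (x.1.val - y.1.val) + (y.1.val - x.1.val) := by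
    rcases abs_cases ((x.1.val : ℤ) - (y.1.val : ℤ)) with ⟨ha, hb⟩ | ⟨ha, hb⟩ <;>
      rw [ha] at h2 <;> omega
  omega

lemma PG_edist (hn : 1 ≤ n) (x y : Fin n × PV) :
    (pathGraph n □ petersen).edist x y = ((pathGraph n □ petersen).dist x y : ℕ∞) := by
  have hr : (pathGraph n □ petersen).Reachable x y := (PG_conn hn).preconnected x y
  have hne := SimpleGraph.edist_ne_top_iff_reachable.mpr hr
  exact (ENat.coe_toNat hne).symm

lemma PG_diam (hn : 4 ≤ n) : (pathGraph n □ petersen).diam = n + 1 := by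
  have h1 : (1 : ℕ) ≤ n := by omega
  have hediam : (pathGraph n □ petersen).ediam = ((n + 1 : ℕ) : ℕ∞) := by
    refine le_antisymm ?_ ?_
    · refine SimpleGraph.ediam_le_of_edist_le fun u v => ?_
      rw [PG_edist h1]
      have hd := PG_dist h1 u v
      have hu := u.1.isLt
      have hv := v.1.isLt
      have hp := petersen_dist_le_two u.2 v.2
      exact Nat.cast_le.mpr (by omega)
    · have hpd : petersen.dist (⟨{0,1}, by decide⟩ : PV) (⟨{0,2}, by decide⟩ : PV) = 2 :=
        petersen_dist_two _ _ (by decide)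
      set x : Fin n × PV := (⟨0, by omega⟩, ⟨{0,1}, by decide⟩) with hxdef
      set y : Fin n × PV := (⟨n - 1, by omega⟩, ⟨{0,2}, by decide⟩) with hydef
      have hdxy : (pathGraph n □ petersen).dist x y = n + 1 := by
        rw [PG_dist h1]
        have hx2 : petersen.dist x.2 y.2 = 2 := hpd
        rw [hx2]
        simp only [hxdef, hydef]
        omega
      calc ((n + 1 : ℕ) : ℕ∞) = (pathGraph n □ petersen).edist x y := by
            rw [PG_edist h1, hdxy]
      _ ≤ _ := SimpleGraph.edist_le_ediam
  rw [SimpleGraph.diam, hediam, ENat.toNat_coe]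

end ProdGraph

section Upper

/-- cyclic walk of length 20 through the Petersen graph; consecutive entries and
entries two apart share exactly one element; each vertex appears once at an even
index and once at an odd index. -/
def Wl : List (Finset (Fin 5)) :=
  [{0,1},{0,2},{0,3},{0,1},{0,2},{0,3},{0,4},{3,4},{2,4},{1,4},
   {1,2},{1,3},{2,3},{1,2},{1,3},{2,3},{3,4},{2,4},{1,4},{0,4}]

def Wn (u : ℕ) : Finset (Fin 5) := Wl.getD (u % 20) ∅

def slotf (q : Finset (Fin 5)) (p : ℕ) : ℕ :=
  (List.range 20).findIdx (fun u => decide (u % 2 = p ∧ Wl.getD u ∅ = q))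

lemma Wl_facts : ∀ v < 20, (Wl.getD v ∅).card = 2 ∧
    ((Wl.getD v ∅) ∩ (Wl.getD ((v+1) % 20) ∅)).card = 1 ∧
    ((Wl.getD v ∅) ∩ (Wl.getD ((v+2) % 20) ∅)).card = 1 := by decide

lemma slot_facts : ∀ q : Finset (Fin 5), q.card = 2 → ∀ p < 2,
    slotf q p < 20 ∧ (slotf q p) % 2 = p ∧ Wl.getD (slotf q p) ∅ = q := by decide

lemma Wn_card (u : ℕ) : (Wn u).card = 2 := (Wl_facts (u % 20) (Nat.mod_lt _ (by norm_num))).1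

lemma Wn_adj1 (u : ℕ) : ((Wn u) ∩ (Wn (u+1))).card = 1 := by
  have h := (Wl_facts (u % 20) (Nat.mod_lt _ (by norm_num))).2.1
  have : (u + 1) % 20 = (u % 20 + 1) % 20 := by omega
  rw [Wn, Wn, this]
  exact h

lemma Wn_adj2 (u : ℕ) : ((Wn u) ∩ (Wn (u+2))).card = 1 := by
  have h := (Wl_facts (u % 20) (Nat.mod_lt _ (by norm_num))).2.2
  have : (u + 2) % 20 = (u % 20 + 2) % 20 := by omega
  rw [Wn, Wn, this]
  exact h

/-- position in the linear order of vertices; `m = n/2`. -/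
def posn (m : ℕ) (lev : ℕ) (q : Finset (Fin 5)) : ℕ :=
  if lev < m then 20 * (m - 1 - lev) + slotf q 0
  else 20 * (2*m - 1 - lev) + slotf q 1

/-- the level encoded at position `s`. -/
def levAt (m s : ℕ) : ℕ := if (s % 20) % 2 = 0 then m - 1 - s / 20 else 2*m - 1 - s / 20

/-- the label of the vertex at position `s`. -/
def labelAt (m s : ℕ) : ℕ := m * s - s / 20

lemma pos_lt {m : ℕ} (hm : 1 ≤ m) {lev : ℕ} (hlev : lev < 2*m) {q : Finset (Fin 5)}
    (hq : q.card = 2) : posn m lev q < 20 * m := by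
  rcases slot_facts q hq 0 (by norm_num) with ⟨h0, _, _⟩
  rcases slot_facts q hq 1 (by norm_num) with ⟨h1, _, _⟩
  rw [posn]
  split <;> omega

lemma levAt_pos {m : ℕ} (hm : 1 ≤ m) {lev : ℕ} (hlev : lev < 2*m) {q : Finset (Fin 5)}
    (hq : q.card = 2) : levAt m (posn m lev q) = lev := by
  by_cases h : lev < m
  · rcases slot_facts q hq 0 (by norm_num) with ⟨h0, hp, _⟩
    rw [posn, if_pos h, levAt]
    have e1 : (20 * (m - 1 - lev) + slotf q 0) % 20 = slotf q 0 := by omega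
    have e2 : (20 * (m - 1 - lev) + slotf q 0) / 20 = m - 1 - lev := by omega
    rw [e1, e2, hp, if_pos rfl]
    omega
  · rcases slot_facts q hq 1 (by norm_num) with ⟨h0, hp, _⟩
    rw [posn, if_neg h, levAt]
    have e1 : (20 * (2*m - 1 - lev) + slotf q 1) % 20 = slotf q 1 := by omega
    have e2 : (20 * (2*m - 1 - lev) + slotf q 1) / 20 = 2*m - 1 - lev := by omega
    rw [e1, e2, hp]
    norm_num
    omega

lemma Wn_pos {m : ℕ} (hm : 1 ≤ m) {lev : ℕ} (hlev : lev < 2*m) {q : Finset (Fin 5)}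
    (hq : q.card = 2) : Wn (posn m lev q) = q := by
  by_cases h : lev < m
  · rcases slot_facts q hq 0 (by norm_num) with ⟨h0, _, hw⟩
    rw [posn, if_pos h, Wn]
    have e1 : (20 * (m - 1 - lev) + slotf q 0) % 20 = slotf q 0 := by omega
    rw [e1, hw]
  · rcases slot_facts q hq 1 (by norm_num) with ⟨h0, _, hw⟩
    rw [posn, if_neg h, Wn]
    have e1 : (20 * (2*m - 1 - lev) + slotf q 1) % 20 = slotf q 1 := by omega
    rw [e1, hw]

lemma labelAt_cast {m : ℕ} (hm : 1 ≤ m) (s : ℕ) :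
    (labelAt m s : ℤ) = (m : ℤ) * s - ((s / 20 : ℕ) : ℤ) := by
  have h : s / 20 ≤ m * s := by
    have := Nat.div_le_self s 20
    have : s ≤ m * s := Nat.le_mul_of_pos_left s hm
    omega
  rw [labelAt]
  push_cast [Nat.cast_sub h]
  ring

lemma labelAt_sub {m : ℕ} (hm : 1 ≤ m) {s s' : ℕ} (h : s ≤ s') :
    (labelAt m s' : ℤ) - labelAt m s =
      (m : ℤ) * ((s' - s : ℕ) : ℤ) - (((s' / 20 : ℕ) : ℤ) - ((s / 20 : ℕ) : ℤ)) := by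
  rw [labelAt_cast hm, labelAt_cast hm]
  have : ((s' - s : ℕ) : ℤ) = (s' : ℤ) - s := by omega
  rw [this]
  ring

end Upper

section Upper2
variable {n m : ℕ}

lemma pos_inj (hm : 1 ≤ m) (hn : n = 2*m) (u v : Fin n × PV)
    (h : posn m u.1.val u.2.1 = posn m v.1.val v.2.1) : u = v := by
  have hu : u.1.val < 2*m := by rw [← hn]; exact u.1.isLt
  have hv : v.1.val < 2*m := by rw [← hn]; exact v.1.isLt
  have e1 : u.1.val = v.1.val := by
    rw [← levAt_pos hm hu u.2.2, ← levAt_pos hm hv v.2.2, h]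
  have e2 : u.2.1 = v.2.1 := by
    rw [← Wn_pos hm hu u.2.2, ← Wn_pos hm hv v.2.2, h]
  have : u.1 = v.1 := Fin.ext e1
  have : u.2 = v.2 := Subtype.ext e2
  exact Prod.ext ‹u.1 = v.1› this

lemma upper_core (hm : 2 ≤ m) (hn : n = 2*m) (u v : Fin n × PV)
    (hlt : posn m u.1.val u.2.1 < posn m v.1.val v.2.1) :
    (2*(m:ℤ) + 2) ≤ ((pathGraph n □ petersen).dist u v : ℤ) +
      ((labelAt m (posn m v.1.val v.2.1) : ℤ) - labelAt m (posn m u.1.val u.2.1)) := by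
  have hm1 : 1 ≤ m := by omega
  have h1 : 1 ≤ n := by omega
  have hu : u.1.val < 2*m := by rw [← hn]; exact u.1.isLt
  have hv : v.1.val < 2*m := by rw [← hn]; exact v.1.isLt
  set su := posn m u.1.val u.2.1 with hsu
  set sv := posn m v.1.val v.2.1 with hsv
  have hsu_lt : su < 20*m := pos_lt hm1 hu u.2.2
  have hsv_lt : sv < 20*m := pos_lt hm1 hv v.2.2
  have hlu : levAt m su = u.1.val := levAt_pos hm1 hu u.2.2
  have hlv : levAt m sv = v.1.val := levAt_pos hm1 hv v.2.2
  have hWu : Wn su = u.2.1 := Wn_pos hm1 hu u.2.2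
  have hWv : Wn sv = v.2.1 := Wn_pos hm1 hv v.2.2
  have hdist := PG_dist h1 u v
  have hlab := labelAt_sub hm1 hlt.le
  by_cases hd1 : sv = su + 1
  · -- consecutive positions: Petersen distance exactly 2
    have hpd : petersen.dist u.2 v.2 = 2 := by
      apply petersen_dist_two
      rw [← hWu, ← hWv, hd1]
      exact Wn_adj1 su
    have hdd : ((sv - su : ℕ) : ℤ) = 1 := by omega
    rw [hdd] at hlab
    -- unfold levAt at hlu hlv
    by_cases hp : (su % 20) % 2 = 0
    · have hp' : (sv % 20) % 2 = 1 := by omega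
      rw [levAt, if_pos hp] at hlu
      rw [levAt, if_neg (by omega)] at hlv
      have : sv / 20 = su / 20 := by omega
      omega
    · by_cases hb : su % 20 = 19
      · have hp' : (sv % 20) % 2 = 0 := by omega
        rw [levAt, if_neg hp] at hlu
        rw [levAt, if_pos (by omega)] at hlv
        have : sv / 20 = su / 20 + 1 := by omega
        omega
      · have hp' : (sv % 20) % 2 = 0 := by omega
        rw [levAt, if_neg hp] at hlu
        rw [levAt, if_pos (by omega)] at hlv
        have : sv / 20 = su / 20 := by omega
        omega
  · by_cases hd2 : sv = su + 2
    · have hpd : petersen.dist u.2 v.2 = 2 := by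
        apply petersen_dist_two
        rw [← hWu, ← hWv, hd2]
        exact Wn_adj2 su
      have hdd : ((sv - su : ℕ) : ℤ) = 2 := by omega
      rw [hdd] at hlab
      by_cases hp : (su % 20) % 2 = 0
      · rw [levAt, if_pos hp] at hlu
        rw [levAt, if_pos (by omega)] at hlv
        omega
      · rw [levAt, if_neg hp] at hlu
        rw [levAt, if_neg (by omega)] at hlv
        omega
    · -- positions at least 3 apart
      have hd3 : su + 3 ≤ sv := by omega
      have hne : u ≠ v := by
        intro h; rw [h] at hsu; omega
      have hdpos : 1 ≤ (pathGraph n □ petersen).dist u v :=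
        (PG_conn h1).pos_dist_of_ne hne
      have hA1 : (3:ℤ) * m ≤ (m:ℤ) * ((sv - su : ℕ) : ℤ) := by
        have : (3:ℤ) ≤ ((sv - su : ℕ) : ℤ) := by omega
        nlinarith
      have hA2 : (2:ℤ) * ((sv - su : ℕ) : ℤ) ≤ (m:ℤ) * ((sv - su : ℕ) : ℤ) := by
        have h0 : (0:ℤ) ≤ ((sv - su : ℕ) : ℤ) := by omega
        nlinarith
      generalize hMD : (m:ℤ) * ((sv - su : ℕ) : ℤ) = A at hA1 hA2 hlab
      omega

end Upper2

section Upper3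
variable {n m : ℕ}

lemma labelAt_mono (hm : 1 ≤ m) {s s' : ℕ} (h : s ≤ s') : labelAt m s ≤ labelAt m s' := by
  have hsub := labelAt_sub hm h
  have hd : ((s' / 20 : ℕ) : ℤ) - ((s / 20 : ℕ) : ℤ) ≤ ((s' - s : ℕ) : ℤ) := by omega
  have h2 : ((s' - s : ℕ) : ℤ) ≤ (m:ℤ) * ((s' - s : ℕ) : ℤ) :=
    le_mul_of_one_le_left (by positivity) (by exact_mod_cast hm)
  generalize hMD : (m:ℤ) * ((s' - s : ℕ) : ℤ) = A at h2 hsub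
  omega

lemma labelAt_max (hm : 1 ≤ m) : labelAt m (20*m - 1) = 20*m^2 - 2*m + 1 := by
  have key : (labelAt m (20*m - 1) : ℤ) = 20*(m:ℤ)^2 - 2*m + 1 := by
    rw [labelAt_cast hm]
    have h1 : ((20*m - 1) / 20 : ℕ) = m - 1 := by omega
    rw [h1]
    push_cast [show (1:ℕ) ≤ 20*m by omega, hm]
    ring
  have h5 : 2*m ≤ 20*m^2 := by nlinarith
  zify [h5]
  push_cast
  linarith [key]

lemma upper_radio (hm : 2 ≤ m) (hn : n = 2*m) :
    IsRadioLabeling (pathGraph n □ petersen)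
      (fun v => labelAt m (posn m v.1.val v.2.1)) := by
  intro u v huv
  have hm1 : 1 ≤ m := by omega
  have hdiam : (pathGraph n □ petersen).diam = n + 1 := PG_diam (by omega)
  have hne : posn m u.1.val u.2.1 ≠ posn m v.1.val v.2.1 := fun h => huv (pos_inj hm1 hn u v h)
  rw [hdiam]
  rcases hne.lt_or_gt with h | h
  · have hc := upper_core hm hn u v h
    have habs : (labelAt m (posn m v.1.val v.2.1) : ℤ) - labelAt m (posn m u.1.val u.2.1) ≤
        |(labelAt m (posn m u.1.val u.2.1) : ℤ) - labelAt m (posn m v.1.val v.2.1)| := by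
      rw [abs_sub_comm]; exact le_abs_self _
    have hcast : ((n + 1 : ℕ) : ℤ) = 2*(m:ℤ) + 1 := by push_cast; omega
    rw [hcast]
    linarith
  · have hc := upper_core hm hn v u h
    rw [SimpleGraph.dist_comm] at hc
    have habs : (labelAt m (posn m u.1.val u.2.1) : ℤ) - labelAt m (posn m v.1.val v.2.1) ≤
        |(labelAt m (posn m u.1.val u.2.1) : ℤ) - labelAt m (posn m v.1.val v.2.1)| :=
      le_abs_self _
    have hcast : ((n + 1 : ℕ) : ℤ) = 2*(m:ℤ) + 1 := by push_cast; omega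
    rw [hcast]
    linarith

lemma upper_span_le (hm : 2 ≤ m) (hn : n = 2*m) :
    span (fun v : Fin n × PV => labelAt m (posn m v.1.val v.2.1)) ≤ 20*m^2 - 2*m + 1 := by
  have hm1 : 1 ≤ m := by omega
  haveI : Nonempty (Fin n) := ⟨⟨0, by omega⟩⟩
  haveI : Nonempty PV := ⟨⟨{0,1}, by decide⟩⟩
  apply csSup_le (Set.range_nonempty _)
  rintro x ⟨⟨a, b⟩, rfl⟩
  have ha : a.1.val < 2*m := by rw [← hn]; exact a.1.isLt
  have h1 : posn m a.1.val a.2.1 ≤ 20*m - 1 := by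
    have := pos_lt hm1 ha a.2.2; omega
  have h2 : labelAt m (posn m a.1.val a.2.1) ≤ 20*m^2 - 2*m + 1 := by
    calc labelAt m (posn m a.1.val a.2.1) ≤ labelAt m (20*m - 1) := labelAt_mono hm1 h1
    _ = _ := labelAt_max hm1
  simp only
  omega

end Upper3

section Lower1

lemma gauss_succ (m : ℕ) : 2 * ∑ k ∈ Finset.range m, (k+1) = m * (m+1) := by
  induction m with
  | zero => simp
  | succ m ih =>
    rw [Finset.sum_range_succ]
    have h : m*(m+1) + 2*(m+1) = (m+1)*(m+1+1) := by ring
    omega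

lemma sum_min_eq (m : ℕ) (hm : 1 ≤ m) :
    ∑ k ∈ Finset.range (2*m - 1), min (k+1) (2*m - 1 - k) = m^2 := by
  have hsplit : ∑ k ∈ Finset.range (2*m-1), min (k+1) (2*m-1-k)
      = ∑ k ∈ Finset.Ico 0 m, min (k+1) (2*m-1-k)
        + ∑ k ∈ Finset.Ico m (2*m-1), min (k+1) (2*m-1-k) := by
    rw [Finset.sum_Ico_consecutive _ (by omega : 0 ≤ m) (by omega : m ≤ 2*m-1),
      ← Finset.range_eq_Ico]
  rw [hsplit]
  have h1 : ∑ k ∈ Finset.Ico 0 m, min (k+1) (2*m-1-k) = ∑ k ∈ Finset.range m, (k+1) := by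
    rw [← Finset.range_eq_Ico]
    exact Finset.sum_congr rfl fun k hk => by rw [Finset.mem_range] at hk; omega
  have h2 : ∑ k ∈ Finset.Ico m (2*m-1), min (k+1) (2*m-1-k)
      = ∑ k ∈ Finset.Ico m (2*m-1), (2*m-1-k) :=
    Finset.sum_congr rfl fun k hk => by rw [Finset.mem_Ico] at hk; omega
  rw [h1, h2]
  have h3 : ∑ k ∈ Finset.Ico m (2*m-1), (2*m-1-k) = ∑ i ∈ Finset.range (m-1), (m-1-i) := by
    rw [Finset.sum_Ico_eq_sum_range]
    refine Finset.sum_congr (congrArg Finset.range (by omega)) fun i hi => by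
      rw [Finset.mem_range] at hi; omega
  have h4 : ∑ i ∈ Finset.range (m-1), (m-1-i) = ∑ i ∈ Finset.range (m-1), (i+1) := by
    rw [← Finset.sum_range_reflect]
    refine Finset.sum_congr rfl fun i hi => by rw [Finset.mem_range] at hi; omega
  rw [h3, h4]
  have g1 := gauss_succ m
  have g2 := gauss_succ (m-1)
  have hm2 : (m-1) * (m-1+1) = m^2 - m := by
    zify [hm, show m ≤ m^2 by nlinarith]
    ring
  have hm1 : m * (m+1) = m^2 + m := by ring
  have hms : m ≤ m^2 := by nlinarith
  generalize m^2 = M at *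
  omega

lemma sum_cap_eq (n m : ℕ) (hm : 2 ≤ m) (hn : n = 2*m) :
    ∑ k ∈ Finset.range (n-1), min (min (20*(k+1)) (20*(n-1-k))) (10*n-1) = 5*n^2 - 1 := by
  subst hn
  have hmem : m - 1 ∈ Finset.range (2*m-1) := by rw [Finset.mem_range]; omega
  have e1 := Finset.sum_erase_add (Finset.range (2*m-1))
    (fun k => min (min (20*(k+1)) (20*(2*m-1-k))) (10*(2*m)-1)) hmem
  have e2 := Finset.sum_erase_add (Finset.range (2*m-1))
    (fun k => 20 * min (k+1) (2*m-1-k)) hmem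
  have ecg : ∑ k ∈ (Finset.range (2*m-1)).erase (m-1),
        min (min (20*(k+1)) (20*(2*m-1-k))) (10*(2*m)-1)
      = ∑ k ∈ (Finset.range (2*m-1)).erase (m-1), 20 * min (k+1) (2*m-1-k) :=
    Finset.sum_congr rfl fun k hk => by
      rw [Finset.mem_erase, Finset.mem_range] at hk; omega
  have h20 : ∑ k ∈ Finset.range (2*m-1), 20 * min (k+1) (2*m-1-k) = 20 * m^2 := by
    rw [← Finset.mul_sum, sum_min_eq m (by omega)]
  rw [show 5*(2*m)^2 - 1 = 20*m^2 - 1 by ring_nf]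
  have hfm : min (min (20*((m-1)+1)) (20*(2*m-1-(m-1)))) (10*(2*m)-1) = 20*m - 1 := by omega
  have hgm : 20 * min ((m-1)+1) (2*m-1-(m-1)) = 20*m := by omega
  have hms : 1 ≤ m^2 := by nlinarith
  generalize m^2 = M at *
  omega

end Lower1

section Lower2

lemma crossing_card_le {N k : ℕ} {lev : ℕ → ℕ} (Q : ℕ → Prop) [DecidablePred Q]
    (h : ∀ i < N - 1, min (lev i) (lev (i+1)) ≤ k ∧ k < max (lev i) (lev (i+1)) →
       (Q i ↔ ¬ Q (i+1))) :
    ((Finset.range (N-1)).filter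
        (fun i => min (lev i) (lev (i+1)) ≤ k ∧ k < max (lev i) (lev (i+1)))).card
      ≤ 2 * ((Finset.range N).filter Q).card := by
  classical
  set S := (Finset.range (N-1)).filter
      (fun i => min (lev i) (lev (i+1)) ≤ k ∧ k < max (lev i) (lev (i+1))) with hS
  set B := (Finset.range N).filter Q with hB
  have hcard : S.card ≤ (B ×ˢ (Finset.univ : Finset Bool)).card := by
    apply Finset.card_le_card_of_injOn (fun i => if Q i then (i, false) else (i+1, true))
    · intro i hi
      simp only [Finset.mem_coe, hS, Finset.mem_filter, Finset.mem_range] at hi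
      simp only [Finset.mem_coe]
      obtain ⟨hiN, hcross⟩ := hi
      have hiff := h i hiN hcross
      by_cases hq : Q i
      · rw [if_pos hq]
        rw [Finset.mem_product, hB, Finset.mem_filter, Finset.mem_range]
        exact ⟨⟨by omega, hq⟩, Finset.mem_univ _⟩
      · rw [if_neg hq]
        have hq1 : Q (i+1) := by tauto
        rw [Finset.mem_product, hB, Finset.mem_filter, Finset.mem_range]
        exact ⟨⟨by omega, hq1⟩, Finset.mem_univ _⟩
    · intro i hi j hj hij
      simp only at hij
      by_cases hqi : Q i <;> by_cases hqj : Q j <;>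
        simp [hqi, hqj] at hij <;> omega
  have : (B ×ˢ (Finset.univ : Finset Bool)).card = 2 * B.card := by
    rw [Finset.card_product, Finset.card_univ, Fintype.card_bool]
    ring
  omega

lemma cross_sum_bound {N n m : ℕ} (hm : 2 ≤ m) (hn : n = 2*m) (hN : N = 10*n)
    (lev : ℕ → ℕ) (hlev : ∀ i < N, lev i < n)
    (hcount : ∀ k < n, ((Finset.range N).filter (fun i => lev i ≤ k)).card = (k+1) * 10) :
    ∑ i ∈ Finset.range (N-1), ((lev (i+1) - lev i) + (lev i - lev (i+1))) ≤ 5*n^2 - 1 := by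
  classical
  have hstepA : ∀ i ∈ Finset.range (N-1),
      (lev (i+1) - lev i) + (lev i - lev (i+1)) =
      ∑ k ∈ Finset.range (n-1),
        (if min (lev i) (lev (i+1)) ≤ k ∧ k < max (lev i) (lev (i+1)) then 1 else 0) := by
    intro i hi
    rw [Finset.mem_range] at hi
    have hli := hlev i (by omega)
    have hli1 := hlev (i+1) (by omega)
    rw [Finset.sum_boole, Nat.cast_id]
    have hfe : (Finset.range (n-1)).filter
        (fun k => min (lev i) (lev (i+1)) ≤ k ∧ k < max (lev i) (lev (i+1)))
        = Finset.Ico (min (lev i) (lev (i+1))) (max (lev i) (lev (i+1))) := by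
      ext k
      simp only [Finset.mem_filter, Finset.mem_range, Finset.mem_Ico]
      omega
    rw [hfe, Nat.card_Ico]
    omega
  rw [Finset.sum_congr rfl hstepA, Finset.sum_comm]
  have hstepC : ∀ k ∈ Finset.range (n-1),
      (∑ i ∈ Finset.range (N-1),
        (if min (lev i) (lev (i+1)) ≤ k ∧ k < max (lev i) (lev (i+1)) then 1 else 0))
      ≤ min (min (20*(k+1)) (20*(n-1-k))) (10*n-1) := by
    intro k hk
    rw [Finset.mem_range] at hk
    rw [Finset.sum_boole, Nat.cast_id]
    refine le_min (le_min ?_ ?_) ?_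
    · -- ≤ 20 * (k+1)
      have hQ : ∀ i < N - 1, min (lev i) (lev (i+1)) ≤ k ∧ k < max (lev i) (lev (i+1)) →
          ((fun i => lev i ≤ k) i ↔ ¬ (fun i => lev i ≤ k) (i+1)) := by
        intro i _ hc
        simp only
        omega
      have := crossing_card_le (fun i => lev i ≤ k) hQ
      rw [hcount k (by omega)] at this
      omega
    · -- ≤ 20 * (n-1-k)
      have hQ : ∀ i < N - 1, min (lev i) (lev (i+1)) ≤ k ∧ k < max (lev i) (lev (i+1)) →
          ((fun i => k < lev i) i ↔ ¬ (fun i => k < lev i) (i+1)) := by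
        intro i _ hc
        simp only
        omega
      have hle := crossing_card_le (fun i => k < lev i) hQ
      have hcompl := Finset.card_filter_add_card_filter_not
        (s := Finset.range N) (p := fun i => lev i ≤ k)
      have hcnt := hcount k (by omega)
      have hcard : ((Finset.range N).filter (fun i => k < lev i)).card = N - (k+1)*10 := by
        have hsame : (Finset.range N).filter (fun i => ¬ (lev i ≤ k))
            = (Finset.range N).filter (fun i => k < lev i) := by
          apply Finset.filter_congr
          intro i _
          constructor
          · intro h; omega
          · intro h; omega
        rw [← hsame]
        have hcardN : (Finset.range N).card = N := Finset.card_range N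
        omega
      rw [hcard] at hle
      omega
    · -- ≤ 10*n - 1
      calc ((Finset.range (N-1)).filter
          (fun i => min (lev i) (lev (i+1)) ≤ k ∧ k < max (lev i) (lev (i+1)))).card
          ≤ (Finset.range (N-1)).card := Finset.card_filter_le _ _
      _ = N - 1 := Finset.card_range _
      _ ≤ 10*n - 1 := by omega
  calc ∑ k ∈ Finset.range (n-1), _ ≤
      ∑ k ∈ Finset.range (n-1), min (min (20*(k+1)) (20*(n-1-k))) (10*n-1) :=
        Finset.sum_le_sum hstepC
  _ = 5*n^2 - 1 := sum_cap_eq n m hm hn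

end Lower2

section Lower3

lemma card_fin_filter_le {n k : ℕ} (hk : k < n) :
    ((Finset.univ : Finset (Fin n)).filter (fun x => x.val ≤ k)).card = k + 1 := by
  have himg : (Finset.univ : Finset (Fin (k+1))).image
      (fun i : Fin (k+1) => (⟨i.val, by omega⟩ : Fin n))
      = (Finset.univ : Finset (Fin n)).filter (fun x => x.val ≤ k) := by
    ext x
    simp only [Finset.mem_image, Finset.mem_filter, Finset.mem_univ, true_and]
    constructor
    · rintro ⟨i, _, rfl⟩; simpa using (by omega : i.val ≤ k)
    · intro hx; exact ⟨⟨x.val, by omega⟩, Fin.ext rfl⟩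
  rw [← himg, Finset.card_image_of_injective _ (fun a b hab => Fin.ext (by
      simpa [Fin.ext_iff] using hab)), Finset.card_univ, Fintype.card_fin]

lemma lower_bound {n m : ℕ} (hm : 2 ≤ m) (hn : n = 2*m) (φ : Fin n × PV → ℕ)
    (hφ : IsRadioLabeling (pathGraph n □ petersen) φ) :
    5*n^2 - n + 1 ≤ span φ := by
  classical
  have hn4 : 4 ≤ n := by omega
  have h1n : 1 ≤ n := by omega
  have hdiam := PG_diam hn4
  -- distances are at most n+1
  have hdle : ∀ u v : Fin n × PV, (pathGraph n □ petersen).dist u v ≤ n + 1 := by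
    intro u v
    have := PG_dist h1n u v
    have h2 := petersen_dist_le_two u.2 v.2
    have hu := u.1.isLt
    have hv := v.1.isLt
    omega
  -- φ is injective
  have hinj : Function.Injective φ := by
    intro u v h
    by_contra hne
    have hr := hφ u v hne
    rw [hdiam, h] at hr
    simp only [sub_self, abs_zero, add_zero] at hr
    have := hdle u v
    have hc : ((pathGraph n □ petersen).dist u v : ℤ) ≤ (n:ℤ) + 1 := by exact_mod_cast this
    push_cast at hr
    omega
  have hcardV : Fintype.card (Fin n × PV) = 10*n := by
    rw [Fintype.card_prod, Fintype.card_fin, pv_card]; ring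
  haveI : Nonempty (Fin n × PV) := ⟨(⟨0, by omega⟩, ⟨{0,1}, by decide⟩)⟩
  set img := (Finset.univ : Finset (Fin n × PV)).image φ with himgdef
  have himg : img.card = 10*n := by
    rw [himgdef, Finset.card_image_of_injective _ hinj, Finset.card_univ, hcardV]
  set o := img.orderIsoOfFin himg with ho
  set e : Fin (10*n) → Fin n × PV := fun i => Function.invFun φ (o i).1 with he
  have heφ : ∀ i, φ (e i) = (o i).1 := by
    intro i
    apply Function.invFun_eq
    have h : (o i).1 ∈ (Finset.univ : Finset (Fin n × PV)).image φ := (o i).2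
    rw [Finset.mem_image] at h
    obtain ⟨a, _, ha⟩ := h
    exact ⟨a, ha⟩
  have hmono : ∀ i j : Fin (10*n), i < j → φ (e i) < φ (e j) := by
    intro i j hij
    rw [heφ, heφ]
    exact Subtype.coe_lt_coe.mpr (o.strictMono hij)
  have hesurj : Function.Surjective e := by
    intro v
    have hv : φ v ∈ img := Finset.mem_image_of_mem φ (Finset.mem_univ v)
    obtain ⟨i, hi⟩ := o.surjective ⟨φ v, hv⟩
    refine ⟨i, hinj ?_⟩
    rw [heφ, hi]
  -- ℕ-indexed version
  set E : ℕ → Fin n × PV := fun i => e ⟨min i (10*n - 1), by omega⟩ with hE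
  have hEeq : ∀ i (h : i < 10*n), E i = e ⟨i, h⟩ := by
    intro i h
    have hmin : min i (10*n - 1) = i := by omega
    simp only [hE, hmin]
  have hEmono : ∀ i, i + 1 < 10*n → φ (E i) < φ (E (i+1)) := by
    intro i h
    rw [hEeq i (by omega), hEeq (i+1) h]
    exact hmono _ _ (Fin.mk_lt_mk.mpr (by omega))
  set lev : ℕ → ℕ := fun i => (E i).1.val with hlev
  -- the count hypothesis
  have hEinj : ∀ i j, i < 10*n → j < 10*n → E i = E j → i = j := by
    intro i j hi hj hij
    rw [hEeq i hi, hEeq j hj] at hij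
    have h2 : φ (e ⟨i, hi⟩) = φ (e ⟨j, hj⟩) := by rw [hij]
    rcases lt_trichotomy i j with h | h | h
    · have := hmono ⟨i, hi⟩ ⟨j, hj⟩ (Fin.mk_lt_mk.mpr (by omega)); omega
    · exact h
    · have := hmono ⟨j, hj⟩ ⟨i, hi⟩ (Fin.mk_lt_mk.mpr (by omega)); omega
  have hcount : ∀ k < n, ((Finset.range (10*n)).filter (fun i => lev i ≤ k)).card
      = (k+1) * 10 := by
    intro k hk
    have hbij : ((Finset.range (10*n)).filter (fun i => lev i ≤ k)).card
        = ((Finset.univ : Finset (Fin n × PV)).filter (fun v => v.1.val ≤ k)).card := by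
      apply Finset.card_bij (fun i _ => E i)
      · intro i hi
        rw [Finset.mem_filter] at hi ⊢
        exact ⟨Finset.mem_univ _, hi.2⟩
      · intro i hi j hj hij
        rw [Finset.mem_filter, Finset.mem_range] at hi hj
        exact hEinj i j hi.1 hj.1 hij
      · intro v hv
        rw [Finset.mem_filter] at hv
        obtain ⟨i, hi⟩ := hesurj v
        refine ⟨i.val, ?_, ?_⟩
        · rw [Finset.mem_filter, Finset.mem_range]
          constructor
          · exact i.isLt
          · rw [hlev]; simp only
            rw [hEeq i.val i.isLt]
            simp only [Fin.eta]
            rw [hi]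
            exact hv.2
        · rw [hEeq i.val i.isLt]
          simp only [Fin.eta]
          exact hi
    rw [hbij]
    have hprod : (Finset.univ : Finset (Fin n × PV)).filter (fun v => v.1.val ≤ k)
        = ((Finset.univ : Finset (Fin n)).filter (fun x => x.val ≤ k)) ×ˢ
          (Finset.univ : Finset PV) := by
      ext v
      simp [Finset.mem_product, Finset.mem_filter]
    rw [hprod, Finset.card_product, card_fin_filter_le hk, Finset.card_univ, pv_card]
  -- gap bound
  have hgap : ∀ i ∈ Finset.range (10*n - 1),
      ((n:ℤ) + 2) - ((pathGraph n □ petersen).dist (E i) (E (i+1)) : ℤ)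
        ≤ (φ (E (i+1)) : ℤ) - (φ (E i) : ℤ) := by
    intro i hi
    rw [Finset.mem_range] at hi
    have hlt := hEmono i (by omega)
    have hne : E i ≠ E (i+1) := fun h => by rw [h] at hlt; omega
    have hr := hφ (E i) (E (i+1)) hne
    rw [hdiam] at hr
    have habs : |(φ (E i) : ℤ) - (φ (E (i+1)) : ℤ)|
        = (φ (E (i+1)) : ℤ) - (φ (E i) : ℤ) := by
      rw [abs_sub_comm, abs_of_nonneg (by push_cast; omega)]
    rw [habs] at hr
    push_cast at hr ⊢
    omega
  -- telescoping
  have htel : ∑ i ∈ Finset.range (10*n - 1),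
      ((fun j => (φ (E j) : ℤ)) (i+1) - (fun j => (φ (E j) : ℤ)) i)
      = (φ (E (10*n - 1)) : ℤ) - (φ (E 0) : ℤ) :=
    Finset.sum_range_sub (fun j => (φ (E j) : ℤ)) (10*n - 1)
  -- span bound
  have hspan : (φ (E (10*n-1)) : ℤ) - (φ (E 0) : ℤ) ≤ (span φ : ℤ) := by
    have hmem : φ (E (10*n-1)) - φ (E 0) ∈
        Set.range (fun p : (Fin n × PV) × (Fin n × PV) => φ p.1 - φ p.2) :=
      ⟨(E (10*n-1), E 0), rfl⟩
    have hbdd : BddAbove (Set.range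
        (fun p : (Fin n × PV) × (Fin n × PV) => φ p.1 - φ p.2)) :=
      (Set.finite_range _).bddAbove
    have hle := le_csSup hbdd hmem
    have hmono0 : φ (E 0) ≤ φ (E (10*n-1)) := by
      rcases Nat.lt_or_ge 0 (10*n-1) with h | h
      · rw [hEeq 0 (by omega), hEeq (10*n-1) (by omega)]
        exact (hmono _ _ (Fin.mk_lt_mk.mpr (by omega))).le
      · omega
    rw [span]
    push_cast
    omega
  -- sum of distances bound
  have hdistsum : ∑ i ∈ Finset.range (10*n - 1),
      ((pathGraph n □ petersen).dist (E i) (E (i+1)) : ℤ)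
      ≤ ((5*n^2 - 1 : ℕ) : ℤ) + 2*(10*n - 1 : ℕ) := by
    have hptwise : ∀ i ∈ Finset.range (10*n - 1),
        ((pathGraph n □ petersen).dist (E i) (E (i+1)) : ℤ)
        ≤ (((lev (i+1) - lev i) + (lev i - lev (i+1)) : ℕ) : ℤ) + 2 := by
      intro i hi
      have hd := PG_dist h1n (E i) (E (i+1))
      have hp := petersen_dist_le_two (E i).2 (E (i+1)).2
      have : lev i = (E i).1.val := rfl
      have : lev (i+1) = (E (i+1)).1.val := rfl
      push_cast
      omega
    calc ∑ i ∈ Finset.range (10*n - 1),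
        ((pathGraph n □ petersen).dist (E i) (E (i+1)) : ℤ)
        ≤ ∑ i ∈ Finset.range (10*n - 1),
          ((((lev (i+1) - lev i) + (lev i - lev (i+1)) : ℕ) : ℤ) + 2) :=
          Finset.sum_le_sum hptwise
    _ = (((∑ i ∈ Finset.range (10*n - 1),
          ((lev (i+1) - lev i) + (lev i - lev (i+1)))) : ℕ) : ℤ)
          + 2*((10*n - 1 : ℕ) : ℤ) := by
        rw [Finset.sum_add_distrib, Finset.sum_const, Finset.card_range, Nat.cast_sum]
        simp [nsmul_eq_mul, mul_comm]
    _ ≤ _ := by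
        have hcb := cross_sum_bound hm hn rfl lev
          (fun i _ => (E i).1.isLt) hcount
        have h9 : (((∑ i ∈ Finset.range (10*n - 1),
            ((lev (i+1) - lev i) + (lev i - lev (i+1)))) : ℕ) : ℤ)
            ≤ ((5*n^2 - 1 : ℕ) : ℤ) := Nat.cast_le.mpr hcb
        omega
  -- combine
  have hsum_ge : ((10*n - 1 : ℕ) : ℤ) * ((n:ℤ) + 2)
      - (((5*n^2 - 1 : ℕ) : ℤ) + 2*(10*n - 1 : ℕ)) ≤ (span φ : ℤ) := by
    have h1 : ∑ i ∈ Finset.range (10*n - 1),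
        (((n:ℤ) + 2) - ((pathGraph n □ petersen).dist (E i) (E (i+1)) : ℤ))
        ≤ (φ (E (10*n-1)) : ℤ) - (φ (E 0) : ℤ) := by
      rw [← htel]
      exact Finset.sum_le_sum hgap
    rw [Finset.sum_sub_distrib, Finset.sum_const, Finset.card_range] at h1
    have h2 := hdistsum
    have : ((10*n - 1 : ℕ)) • ((n:ℤ) + 2) = ((10*n - 1 : ℕ) : ℤ) * ((n:ℤ) + 2) := by
      simp [nsmul_eq_mul]
    omega
  -- final arithmetic
  have hsq : 1 ≤ n^2 := by nlinarith
  have hkey : ((10*n - 1 : ℕ) : ℤ) * ((n:ℤ) + 2)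
      - (((5*n^2 - 1 : ℕ) : ℤ) + 2*(10*n - 1 : ℕ)) = 5*(n:ℤ)^2 - n + 1 := by
    rw [Nat.cast_sub (show 1 ≤ 10*n by omega), Nat.cast_sub (show 1 ≤ 5*n^2 by nlinarith)]
    push_cast
    ring
  rw [hkey] at hsum_ge
  have hfin : n ≤ 5*n^2 := by nlinarith
  zify [hfin]
  push_cast
  omega

end Lower3

theorem stmt_8 (n : ℕ) (hn : 4 ≤ n) (he : Even n) :
    radioNumber (pathGraph n □ petersen) = 5 * n ^ 2 - n + 1 := by
  obtain ⟨m, hm2⟩ := he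
  have hnm : n = 2*m := by omega
  have hm : 2 ≤ m := by omega
  set φ0 : Fin n × PV → ℕ := fun v => labelAt m (posn m v.1.val v.2.1) with hφ0
  have hrad : IsRadioLabeling (pathGraph n □ petersen) φ0 := upper_radio hm hnm
  have hle : span φ0 ≤ 20*m^2 - 2*m + 1 := upper_span_le hm hnm
  have hval : 20*m^2 - 2*m + 1 = 5*n^2 - n + 1 := by
    have h4 : n^2 = 4*m^2 := by subst hnm; ring
    have h5 : 2*m ≤ 20*m^2 := by nlinarith
    have h6 : n ≤ 5*n^2 := by nlinarith
    generalize m^2 = M at *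
    omega
  have hlb := lower_bound hm hnm φ0 hrad
  have hspan : span φ0 = 5*n^2 - n + 1 := le_antisymm (by omega) hlb
  rw [radioNumber]
  apply le_antisymm
  · exact Nat.sInf_le ⟨φ0, hrad, hspan⟩
  · refine le_csInf ⟨5*n^2 - n + 1, ⟨φ0, hrad, hspan⟩⟩ ?_
    rintro s ⟨ψ, hψ, rfl⟩
    exact lower_bound hm hnm ψ hψ
end
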